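/- Let G = ⊕_{n ∈ ℤ} ℤ with standard basis (χ_n)_{n∈ℤ}, and define the group homomorphism T : G → G by T(χ_0) = −χ_1 − χ_{−1} and T(χ_n) = χ_n − χ_{n−1} − χ_{n+1} for n ≠ 0. Then T is injective, and the cokernel G/im(T) is free abelian of rank 2, generated by the images of χ_0 and χ_1. -/

import Mathlib

namespace Stmt11Aux

def p : ℕ → ℤ
  | 0 => 1 | 1 => 0 | 2 => -1 | 3 => -1 | 4 => 0 | _ => 1

def q : ℕ → ℤ
  | 0 => 0 | 1 => 1 | 2 => 1 | 3 => 0 | 4 => -1 | _ => -1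

def aa (n : ℤ) : ℤ := p (n.natAbs % 6)
def bb (n : ℤ) : ℤ := (if n < 0 then -1 else 1) * q (n.natAbs % 6)

lemma pnat (k : ℕ) : p ((k+1) % 6) = p (k % 6) + p ((k+2) % 6) := by
  have h1 : (k+1) % 6 = (k % 6 + 1) % 6 := by omega
  have h2 : (k+2) % 6 = (k % 6 + 2) % 6 := by omega
  have h : k % 6 < 6 := Nat.mod_lt _ (by norm_num)
  rw [h1, h2]
  set r := k % 6 with hr
  interval_cases r <;> decide

lemma qnat (k : ℕ) : q ((k+1) % 6) = q (k % 6) + q ((k+2) % 6) := by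
  have h1 : (k+1) % 6 = (k % 6 + 1) % 6 := by omega
  have h2 : (k+2) % 6 = (k % 6 + 2) % 6 := by omega
  have h : k % 6 < 6 := Nat.mod_lt _ (by norm_num)
  rw [h1, h2]
  set r := k % 6 with hr
  interval_cases r <;> decide

lemma aa_neg (n : ℤ) : aa (-n) = aa n := by simp [aa]

lemma bb_neg (n : ℤ) : bb (-n) = -bb n := by
  rcases eq_or_ne n 0 with rfl | h
  · norm_num [bb]; decide
  · rcases lt_or_gt_of_ne h with h | h
    · simp only [bb, Int.natAbs_neg]
      rw [if_pos h, if_neg (by omega : ¬ (-n < 0))]; ring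
    · simp only [bb, Int.natAbs_neg]
      rw [if_neg (by omega : ¬ (n < 0)), if_pos (by omega : (-n) < 0)]; ring

lemma aa_rec_pos (k : ℕ) : aa ((k:ℤ)+1) = aa k + aa ((k:ℤ)+2) := by
  have h0 : ((k:ℤ)+1).natAbs = k+1 := by omega
  have h1 : ((k:ℤ)).natAbs = k := by omega
  have h2 : ((k:ℤ)+2).natAbs = k+2 := by omega
  simp only [aa, h0, h1, h2]; exact pnat k

lemma bb_rec_pos (k : ℕ) : bb ((k:ℤ)+1) = bb k + bb ((k:ℤ)+2) := by
  have h0 : ((k:ℤ)+1).natAbs = k+1 := by omega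
  have h1 : ((k:ℤ)).natAbs = k := by omega
  have h2 : ((k:ℤ)+2).natAbs = k+2 := by omega
  simp only [bb, h0, h1, h2]
  rw [if_neg (by omega : ¬ ((k:ℤ)+1 < 0)), if_neg (by omega : ¬ ((k:ℤ) < 0)),
    if_neg (by omega : ¬ ((k:ℤ)+2 < 0))]
  simpa using qnat k

lemma aa_rec (n : ℤ) (hn : n ≠ 0) : aa n = aa (n-1) + aa (n+1) := by
  rcases lt_or_gt_of_ne hn with h | h
  · obtain ⟨k, hk⟩ : ∃ k : ℕ, (k:ℤ) = -n - 1 := ⟨(-n-1).toNat, by omega⟩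
    have H := aa_rec_pos k
    rw [hk, show (-n-1+1 : ℤ) = -n from by ring, show (-n-1+2:ℤ) = -n+1 from by ring,
      show (-n+1:ℤ) = -(n-1) from by ring, show (-n-1:ℤ) = -(n+1) from by ring,
      aa_neg, aa_neg, aa_neg] at H
    linarith
  · obtain ⟨k, hk⟩ : ∃ k : ℕ, (k:ℤ) = n - 1 := ⟨(n-1).toNat, by omega⟩
    have H := aa_rec_pos k
    rw [hk, show (n-1+1 : ℤ) = n from by ring, show (n-1+2:ℤ) = n+1 from by ring] at H
    linarith

lemma bb_rec (n : ℤ) (hn : n ≠ 0) : bb n = bb (n-1) + bb (n+1) := by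
  rcases lt_or_gt_of_ne hn with h | h
  · obtain ⟨k, hk⟩ : ∃ k : ℕ, (k:ℤ) = -n - 1 := ⟨(-n-1).toNat, by omega⟩
    have H := bb_rec_pos k
    rw [hk, show (-n-1+1 : ℤ) = -n from by ring, show (-n-1+2:ℤ) = -n+1 from by ring,
      show (-n+1:ℤ) = -(n-1) from by ring, show (-n-1:ℤ) = -(n+1) from by ring,
      bb_neg, bb_neg, bb_neg] at H
    linarith
  · obtain ⟨k, hk⟩ : ∃ k : ℕ, (k:ℤ) = n - 1 := ⟨(n-1).toNat, by omega⟩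
    have H := bb_rec_pos k
    rw [hk, show (n-1+1 : ℤ) = n from by ring, show (n-1+2:ℤ) = n+1 from by ring] at H
    linarith

lemma aa0 : aa 0 = 1 := by decide
lemma aa1 : aa 1 = 0 := by decide
lemma aam1 : aa (-1) = 0 := by decide
lemma bb0 : bb 0 = 0 := by decide
lemma bb1 : bb 1 = 1 := by decide
lemma bbm1 : bb (-1) = -1 := by decide

end Stmt11Aux

open Stmt11Aux in
set_option maxHeartbeats 1000000 in
theorem stmt11 (T : (ℤ →₀ ℤ) →ₗ[ℤ] (ℤ →₀ ℤ))
    (hT0 : T (Finsupp.single 0 1) = -Finsupp.single 1 1 - Finsupp.single (-1) 1)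
    (hTn : ∀ n : ℤ, n ≠ 0 → T (Finsupp.single n 1) =
      Finsupp.single n 1 - Finsupp.single (n - 1) 1 - Finsupp.single (n + 1) 1) :
    Function.Injective T ∧
    ∃ e : ((ℤ →₀ ℤ) ⧸ LinearMap.range T) ≃ₗ[ℤ] (Fin 2 → ℤ),
      e (Submodule.Quotient.mk (Finsupp.single 0 1)) = ![1, 0] ∧
      e (Submodule.Quotient.mk (Finsupp.single 1 1)) = ![0, 1] := by
  -- pointwise formula for T
  have Teval : ∀ (f : ℤ →₀ ℤ) (m : ℤ),
      T f m = (if m = 0 then 0 else f m) - f (m+1) - f (m-1) := by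
    intro f m
    induction f using Finsupp.induction_linear with
    | zero => simp
    | add f g hf hg =>
      simp only [map_add, Finsupp.add_apply, hf, hg]
      split_ifs <;> ring
    | single n c =>
      have hs : Finsupp.single n c = c • Finsupp.single n (1:ℤ) := by
        rw [Finsupp.smul_single, smul_eq_mul, mul_one]
      rw [hs, map_smul]
      rcases eq_or_ne n 0 with rfl | hn
      · rw [hT0]
        simp only [Finsupp.smul_apply, Finsupp.sub_apply, Finsupp.neg_apply,
          Finsupp.single_apply, smul_eq_mul]
        split_ifs <;> omega
      · rw [hTn n hn]
        simp only [Finsupp.smul_apply, Finsupp.sub_apply, Finsupp.single_apply, smul_eq_mul]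
        split_ifs <;> omega
  -- injectivity
  have hinj : Function.Injective T := by
    rw [← LinearMap.ker_eq_bot, LinearMap.ker_eq_bot']
    intro f hf
    by_contra hne
    have hsupp : f.support.Nonempty := Finsupp.support_nonempty_iff.mpr hne
    set N := f.support.max' hsupp with hN
    have hNmem : N ∈ f.support := f.support.max'_mem hsupp
    have hfN : f N ≠ 0 := Finsupp.mem_support_iff.mp hNmem
    have hgt : ∀ m, N < m → f m = 0 := by
      intro m hm
      by_contra h
      exact absurd (f.support.le_max' m (Finsupp.mem_support_iff.mpr h)) (by omega)
    have h1 := Teval f (N+1)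
    rw [hf, Finsupp.zero_apply, show N+1+1 = N+2 from by ring, show N+1-1 = N from by ring,
      hgt (N+1) (by omega), hgt (N+2) (by omega)] at h1
    split_ifs at h1 <;> omega
  refine ⟨hinj, ?_⟩
  -- the functional φ
  set v : ℤ → (Fin 2 → ℤ) := fun n => ![aa n, bb n] with hv
  set φ : (ℤ →₀ ℤ) →ₗ[ℤ] (Fin 2 → ℤ) := Finsupp.linearCombination ℤ v with hφ
  have hφs : ∀ n : ℤ, φ (Finsupp.single n 1) = ![aa n, bb n] := by
    intro n
    rw [hφ, Finsupp.linearCombination_single, one_smul]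
  -- φ kills the image of T
  have hcomp : ∀ n : ℤ, φ (T (Finsupp.single n 1)) = 0 := by
    intro n
    rcases eq_or_ne n 0 with rfl | hn
    · rw [hT0, map_sub, map_neg, hφs, hφs]
      funext i
      fin_cases i <;>
        simp [aa1, bb1, aam1, bbm1]
    · rw [hTn n hn, map_sub, map_sub, hφs, hφs, hφs]
      have ha := aa_rec n hn
      have hb := bb_rec n hn
      funext i
      fin_cases i <;> simp <;> omega
  have hrange : LinearMap.range T ≤ LinearMap.ker φ := by
    rintro x ⟨g, rfl⟩
    have hc : φ.comp T = 0 := by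
      apply Finsupp.lhom_ext
      intro n c
      have hs : Finsupp.single n c = c • Finsupp.single n (1:ℤ) := by
        rw [Finsupp.smul_single, smul_eq_mul, mul_one]
      simp only [LinearMap.comp_apply, LinearMap.zero_apply, hs, map_smul, hcomp n, smul_zero]
    have := LinearMap.congr_fun hc g
    simpa using this
  -- quotient analysis
  set mkq : (ℤ →₀ ℤ) →ₗ[ℤ] ((ℤ →₀ ℤ) ⧸ LinearMap.range T) := (LinearMap.range T).mkQ with hmkq
  have hrel : ∀ n : ℤ, n ≠ 0 →
      mkq (Finsupp.single n 1) = mkq (Finsupp.single (n-1) 1) + mkq (Finsupp.single (n+1) 1) := by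
    intro n hn
    have hm : Finsupp.single n 1 - Finsupp.single (n-1) 1 - Finsupp.single (n+1) 1
        ∈ LinearMap.range T := ⟨Finsupp.single n 1, hTn n hn⟩
    have h0 : mkq (Finsupp.single n 1 - Finsupp.single (n-1) 1 - Finsupp.single (n+1) 1) = 0 :=
      (Submodule.Quotient.mk_eq_zero _).mpr hm
    rw [map_sub, map_sub, sub_sub, sub_eq_zero] at h0
    exact h0
  have hrel0 : mkq (Finsupp.single (-1) 1) = - mkq (Finsupp.single 1 1) := by
    have hm : -Finsupp.single 1 1 - Finsupp.single (-1) 1 ∈ LinearMap.range T :=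
      ⟨Finsupp.single 0 1, hT0⟩
    have h0 : mkq (-Finsupp.single 1 1 - Finsupp.single (-1) 1) = 0 :=
      (Submodule.Quotient.mk_eq_zero _).mpr hm
    rw [map_sub, map_neg, sub_eq_zero] at h0
    exact h0.symm
  set q0 := mkq (Finsupp.single 0 1) with hq0
  set q1 := mkq (Finsupp.single 1 1) with hq1
  have claim : ∀ n : ℤ, mkq (Finsupp.single n 1) = aa n • q0 + bb n • q1 := by
    have key : ∀ k : ℕ,
        (mkq (Finsupp.single (k:ℤ) 1) = aa k • q0 + bb k • q1) ∧
        (mkq (Finsupp.single ((k:ℤ)+1) 1) = aa ((k:ℤ)+1) • q0 + bb ((k:ℤ)+1) • q1) ∧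
        (mkq (Finsupp.single (-(k:ℤ)) 1) = aa (-(k:ℤ)) • q0 + bb (-(k:ℤ)) • q1) ∧
        (mkq (Finsupp.single (-(k:ℤ)-1) 1) = aa (-(k:ℤ)-1) • q0 + bb (-(k:ℤ)-1) • q1) := by
      intro k
      induction k with
      | zero =>
        simp only [Nat.cast_zero, neg_zero, zero_add, zero_sub]
        refine ⟨?_, ?_, ?_, ?_⟩
        · rw [aa0, bb0, one_smul, zero_smul, add_zero]
        · rw [aa1, bb1, zero_smul, one_smul, zero_add]
        · rw [aa0, bb0, one_smul, zero_smul, add_zero]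
        · rw [aam1, bbm1, zero_smul, neg_smul, one_smul, zero_add, hrel0]
      | succ k ih =>
        obtain ⟨h0, h1, h2, h3⟩ := ih
        push_cast
        have step1 : mkq (Finsupp.single ((k:ℤ)+2) 1)
            = aa ((k:ℤ)+2) • q0 + bb ((k:ℤ)+2) • q1 := by
          have h := hrel ((k:ℤ)+1) (by omega)
          rw [show ((k:ℤ)+1-1) = (k:ℤ) from by ring, show ((k:ℤ)+1+1) = (k:ℤ)+2 from by ring,
            h0, h1] at h
          have ha : aa ((k:ℤ)+2) = aa ((k:ℤ)+1) - aa k := by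
            have := aa_rec ((k:ℤ)+1) (by omega)
            rw [show ((k:ℤ)+1-1) = (k:ℤ) from by ring,
              show ((k:ℤ)+1+1) = (k:ℤ)+2 from by ring] at this
            linarith
          have hb : bb ((k:ℤ)+2) = bb ((k:ℤ)+1) - bb k := by
            have := bb_rec ((k:ℤ)+1) (by omega)
            rw [show ((k:ℤ)+1-1) = (k:ℤ) from by ring,
              show ((k:ℤ)+1+1) = (k:ℤ)+2 from by ring] at this
            linarith
          have heq : mkq (Finsupp.single ((k:ℤ)+2) 1)
              = (aa ((k:ℤ)+1) • q0 + bb ((k:ℤ)+1) • q1) - (aa k • q0 + bb k • q1) := by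
            rw [h]; abel
          rw [heq, ha, hb, sub_smul, sub_smul]
          abel
        have step2 : mkq (Finsupp.single (-(k:ℤ)-2) 1)
            = aa (-(k:ℤ)-2) • q0 + bb (-(k:ℤ)-2) • q1 := by
          have h := hrel (-(k:ℤ)-1) (by omega)
          rw [show (-(k:ℤ)-1-1) = -(k:ℤ)-2 from by ring,
            show (-(k:ℤ)-1+1) = -(k:ℤ) from by ring, h2] at h
          have ha : aa (-(k:ℤ)-2) = aa (-(k:ℤ)-1) - aa (-(k:ℤ)) := by
            have := aa_rec (-(k:ℤ)-1) (by omega)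
            rw [show (-(k:ℤ)-1-1) = -(k:ℤ)-2 from by ring,
              show (-(k:ℤ)-1+1) = -(k:ℤ) from by ring] at this
            linarith
          have hb : bb (-(k:ℤ)-2) = bb (-(k:ℤ)-1) - bb (-(k:ℤ)) := by
            have := bb_rec (-(k:ℤ)-1) (by omega)
            rw [show (-(k:ℤ)-1-1) = -(k:ℤ)-2 from by ring,
              show (-(k:ℤ)-1+1) = -(k:ℤ) from by ring] at this
            linarith
          have heq : mkq (Finsupp.single (-(k:ℤ)-2) 1)
              = (aa (-(k:ℤ)-1) • q0 + bb (-(k:ℤ)-1) • q1)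
                - (aa (-(k:ℤ)) • q0 + bb (-(k:ℤ)) • q1) := by
            rw [← h3, h]; abel
          rw [heq, ha, hb, sub_smul, sub_smul]
          abel
        refine ⟨?_, ?_, ?_, ?_⟩
        · exact h1
        · rw [show ((k:ℤ)+1+1) = (k:ℤ)+2 from by ring]; exact step1
        · rw [show (-((k:ℤ)+1)) = -(k:ℤ)-1 from by ring]; exact h3
        · rw [show (-((k:ℤ)+1)-1) = -(k:ℤ)-2 from by ring]; exact step2
    intro n
    rcases le_or_gt 0 n with h | h
    · have := (key n.toNat).1
      rwa [show ((n.toNat : ℤ)) = n from by omega] at this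
    · have := (key (-n).toNat).2.2.1
      rwa [show (-((-n).toNat : ℤ)) = n from by omega] at this
  -- every element is equivalent to its φ-image combination
  have hformula : ∀ f : ℤ →₀ ℤ, mkq f = (φ f 0) • q0 + (φ f 1) • q1 := by
    set L2 : (ℤ →₀ ℤ) →ₗ[ℤ] ((ℤ →₀ ℤ) ⧸ LinearMap.range T) :=
      ((LinearMap.proj (0 : Fin 2)).comp φ).smulRight q0
        + ((LinearMap.proj (1 : Fin 2)).comp φ).smulRight q1 with hL2
    have : mkq = L2 := by
      apply Finsupp.lhom_ext
      intro n c
      have hs : Finsupp.single n c = c • Finsupp.single n (1:ℤ) := by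
        rw [Finsupp.smul_single, smul_eq_mul, mul_one]
      rw [hs, map_smul, map_smul, claim n]
      simp only [hL2, LinearMap.add_apply, LinearMap.smulRight_apply, LinearMap.comp_apply,
        LinearMap.proj_apply, hφs]
      simp only [Matrix.cons_val_zero, Matrix.cons_val_one, Matrix.head_cons, smul_add,
        smul_smul, mul_comm]
    intro f
    rw [this]
    simp only [hL2, LinearMap.add_apply, LinearMap.smulRight_apply, LinearMap.comp_apply,
      LinearMap.proj_apply]
  have hker : LinearMap.ker φ ≤ LinearMap.range T := by
    intro f hf
    rw [LinearMap.mem_ker] at hf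
    have := hformula f
    rw [hf] at this
    rw [show (0 : Fin 2 → ℤ) 0 = 0 from rfl, show (0 : Fin 2 → ℤ) 1 = 0 from rfl,
      zero_smul, zero_smul, add_zero] at this
    rw [← Submodule.ker_mkQ (LinearMap.range T), LinearMap.mem_ker]
    exact this
  -- build the equivalence
  have hle : LinearMap.range T ≤ LinearMap.ker φ := hrange
  set ψ : ((ℤ →₀ ℤ) ⧸ LinearMap.range T) →ₗ[ℤ] (Fin 2 → ℤ) :=
    (LinearMap.range T).liftQ φ hle with hψdef
  have hψ : ∀ x : ℤ →₀ ℤ, ψ (Submodule.Quotient.mk x) = φ x := fun x =>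
    Submodule.liftQ_apply _ _ _
  have hsurj : Function.Surjective ψ := by
    intro w
    refine ⟨Submodule.Quotient.mk (w 0 • Finsupp.single 0 1 + w 1 • Finsupp.single 1 1), ?_⟩
    rw [hψ, map_add, map_smul, map_smul, hφs, hφs]
    funext i
    fin_cases i <;> simp [aa0, bb0, aa1, bb1]
  have hinjψ : Function.Injective ψ := by
    rw [← LinearMap.ker_eq_bot]
    exact Submodule.ker_liftQ_eq_bot _ _ _ hker
  refine ⟨LinearEquiv.ofBijective ψ ⟨hinjψ, hsurj⟩, ?_, ?_⟩
  · show ψ _ = _; rw [hψ, hφs, aa0, bb0]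
  · show ψ _ = _; rw [hψ, hφs, aa1, bb1]
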